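/- Let n ≥ 2 and N > n−1. Then for every x ∈ ℝⁿ and r > 0, the surface integral of ⟨z⟩^(−N) over the sphere {z : |x−z| = r} satisfies: it is ≲ r^(n−1) ⟨x⟩^(−N) if r < |x|/2; ≲ |x|^(n−1) ⟨x⟩^(1−n) ⟨|x|−r⟩^(n−1−N) if |x|/2 ≤ r ≤ 2|x|; and ≲ r^(n−1) ⟨r⟩^(−N) if r > 2|x|. -/

import Mathlib

open MeasureTheory Real

noncomputable def jap (t : ℝ) : ℝ := Real.sqrt (1 + t ^ 2)

open RealInnerProductSpace
open scoped NNReal ENNReal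
set_option maxHeartbeats 1600000

lemma euclid_ball_bound (k : ℕ) {ρ : ℝ} (hρ : 0 ≤ ρ) :
    μH[(k:ℝ)] (Metric.closedBall (0 : EuclideanSpace ℝ (Fin k)) ρ)
      ≤ ENNReal.ofReal ((2 * Real.sqrt k * ρ) ^ k) := by
  set c : ℝ≥0 := (Fintype.card (Fin k) : ℝ≥0) ^ ((1 / (2:ℝ≥0∞)).toReal) with hc
  have hanti := PiLp.antilipschitzWith_ofLp 2 (fun _ : Fin k => ℝ)
  have hF : LipschitzWith c (WithLp.equiv 2 (∀ _ : Fin k, ℝ)).symm :=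
    hanti.to_rightInverse (WithLp.equiv 2 (∀ _ : Fin k, ℝ)).apply_symm_apply
  have hsub : Metric.closedBall (0 : EuclideanSpace ℝ (Fin k)) ρ ⊆
      (WithLp.equiv 2 (∀ _ : Fin k, ℝ)).symm '' (Metric.closedBall 0 ρ) := by
    intro z hz
    refine ⟨WithLp.equiv 2 _ z, ?_, (WithLp.equiv 2 _).symm_apply_apply z⟩
    have h1 := (PiLp.lipschitzWith_ofLp 2 (fun _ : Fin k => ℝ)).dist_le_mul z 0
    simp only [NNReal.coe_one, one_mul] at h1
    have : (WithLp.equiv 2 (∀ _ : Fin k, ℝ)) 0 = 0 := rfl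
    rw [Metric.mem_closedBall] at hz ⊢
    calc dist (WithLp.equiv 2 (∀ _ : Fin k, ℝ) z) 0
        = dist (WithLp.equiv 2 (∀ _ : Fin k, ℝ) z) (WithLp.equiv 2 (∀ _ : Fin k, ℝ) 0) := by
          rw [this]
      _ ≤ dist z 0 := h1
      _ ≤ ρ := hz
  have hpi : μH[(k:ℝ)] (Metric.closedBall (0 : ∀ _ : Fin k, ℝ) ρ) =
      ENNReal.ofReal ((2*ρ)^k) := by
    have := MeasureTheory.hausdorffMeasure_pi_real (ι := Fin k)
    rw [show ((Fintype.card (Fin k) : ℝ)) = (k:ℝ) by simp] at this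
    rw [this, MeasureTheory.volume_pi_closedBall _ hρ]
    simp [ENNReal.ofReal_pow (by positivity : (0:ℝ) ≤ 2*ρ)]
  have hCoe : ((c : ℝ≥0∞)) ^ (k:ℝ) = ENNReal.ofReal (Real.sqrt k ^ k) := by
    rw [ENNReal.rpow_natCast, ← ENNReal.coe_pow, ← ENNReal.ofReal_coe_nnreal]
    congr 1
    push_cast
    rw [hc]
    push_cast [NNReal.coe_rpow]
    congr 1
    rw [Real.sqrt_eq_rpow]
    norm_num
  calc μH[(k:ℝ)] (Metric.closedBall (0 : EuclideanSpace ℝ (Fin k)) ρ)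
      ≤ μH[(k:ℝ)] ((WithLp.equiv 2 (∀ _ : Fin k, ℝ)).symm '' (Metric.closedBall 0 ρ)) :=
        measure_mono hsub
    _ ≤ (c : ℝ≥0∞) ^ (k:ℝ) * μH[(k:ℝ)] (Metric.closedBall (0 : ∀ _ : Fin k, ℝ) ρ) :=
        hF.hausdorffMeasure_image_le (by positivity) _
    _ = ENNReal.ofReal (Real.sqrt k ^ k) * ENNReal.ofReal ((2*ρ)^k) := by rw [hCoe, hpi]
    _ = ENNReal.ofReal ((2 * Real.sqrt k * ρ) ^ k) := by
        rw [← ENNReal.ofReal_mul (by positivity)]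
        ring_nf

lemma abs_sqrt_sub_sqrt_le {b r nw nw' d : ℝ} (hb : 0 < b) (hr : 0 < r)
    (h0w : 0 ≤ nw) (h0w' : 0 ≤ nw') (hw : nw^2 ≤ r^2 - b^2) (hw' : nw'^2 ≤ r^2 - b^2)
    (hd1 : -d ≤ nw - nw') (hd2 : nw - nw' ≤ d) :
    |Real.sqrt (r^2 - nw'^2) - Real.sqrt (r^2 - nw^2)| ≤ (r/b) * d := by
  have hd0 : 0 ≤ d := by nlinarith
  set u := Real.sqrt (r^2 - nw^2) with hu
  set u' := Real.sqrt (r^2 - nw'^2) with hu'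
  have hub : b ≤ u := by
    rw [hu, show b = Real.sqrt (b^2) from (Real.sqrt_sq hb.le).symm]
    exact Real.sqrt_le_sqrt (by nlinarith)
  have hub' : b ≤ u' := by
    rw [hu', show b = Real.sqrt (b^2) from (Real.sqrt_sq hb.le).symm]
    exact Real.sqrt_le_sqrt (by nlinarith)
  have husq : u^2 = r^2 - nw^2 := Real.sq_sqrt (by nlinarith)
  have husq' : u'^2 = r^2 - nw'^2 := Real.sq_sqrt (by nlinarith)
  have hnwr : nw ≤ r := by nlinarith
  have hnwr' : nw' ≤ r := by nlinarith
  have key : ∀ p q pw qw : ℝ, b ≤ p → b ≤ q → 0 ≤ pw → 0 ≤ qw → pw ≤ r → qw ≤ r →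
      pw - qw ≤ d → p^2 = r^2 - pw^2 → q^2 = r^2 - qw^2 → (q - p) * b ≤ r * d := by
    intro p q pw qw hp hq hpw hqw hpwr hqwr hdq hpsq hqsq
    have e1 : (q-p)*(q+p) = pw^2 - qw^2 := by linear_combination hqsq - hpsq
    rcases le_or_gt q p with h | h
    · have h0 : (0:ℝ) ≤ (p - q) * b := mul_nonneg (by linarith) hb.le
      have h1 : (0:ℝ) ≤ r * d := mul_nonneg hr.le hd0
      nlinarith
    · have s1 : (pw-qw)*(pw+qw) ≤ d*(pw+qw) :=
        mul_le_mul_of_nonneg_right hdq (by linarith)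
      have s2 : d*(pw+qw) ≤ d*(2*r) := mul_le_mul_of_nonneg_left (by linarith) hd0
      have e2 : pw^2 - qw^2 ≤ 2*r*d := by nlinarith [s1, s2]
      have s3 : (q-p)*(2*b) ≤ (q-p)*(q+p) :=
        mul_le_mul_of_nonneg_left (by linarith) (by linarith)
      nlinarith [s3, e1, e2]
  rw [abs_le]
  constructor
  · rw [neg_le, neg_sub, div_mul_eq_mul_div, le_div_iff₀ hb]
    exact key u' u nw' nw hub' hub h0w' h0w hnwr' hnwr (by linarith) husq' husq
  · rw [div_mul_eq_mul_div, le_div_iff₀ hb]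
    exact key u u' nw nw' hub hub' h0w h0w' hnwr hnwr' (by linarith) husq husq'

lemma cap_bound (n : ℕ) (hn : 2 ≤ n) (x v : EuclideanSpace ℝ (Fin n)) (hv : ‖v‖ = 1)
    {r b ρ : ℝ} (hr : 0 < r) (hb : 0 < b) (hbr : b ≤ r) (hρ2 : r^2 - b^2 ≤ ρ^2) (hρ : 0 ≤ ρ) :
    μH[(n:ℝ)-1] {z : EuclideanSpace ℝ (Fin n) | z ∈ Metric.sphere x r ∧ ⟪z - x, v⟫ ≤ -b}
      ≤ ENNReal.ofReal (((1 + r/b) * (2 * Real.sqrt ((n:ℝ)-1) * ρ)) ^ (n-1)) := by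
  have hv0 : v ≠ 0 := by intro h; rw [h, norm_zero] at hv; norm_num at hv
  have hcast : ((n-1:ℕ):ℝ) = (n:ℝ) - 1 := by
    have h1 : (1:ℕ) ≤ n := by omega
    push_cast [Nat.cast_sub h1]; ring
  haveI : Fact (Module.finrank ℝ (EuclideanSpace ℝ (Fin n)) = (n-1) + 1) :=
    ⟨by rw [finrank_euclideanSpace_fin]; omega⟩
  set K : Submodule ℝ (EuclideanSpace ℝ (Fin n)) := (ℝ ∙ v)ᗮ with hK
  let B : OrthonormalBasis (Fin (n-1)) ℝ K :=
    OrthonormalBasis.fromOrthogonalSpanSingleton (n-1) hv0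
  let V : EuclideanSpace ℝ (Fin (n-1)) →ₗᵢ[ℝ] EuclideanSpace ℝ (Fin n) :=
    K.subtypeₗᵢ.comp B.repr.symm.toLinearIsometry
  set ρ₀ : ℝ := Real.sqrt (r^2 - b^2) with hρ₀
  have hb2r2 : 0 ≤ r^2 - b^2 := by nlinarith
  have hρ₀ρ : ρ₀ ≤ ρ := by
    rw [hρ₀]
    calc Real.sqrt (r^2-b^2) ≤ Real.sqrt (ρ^2) := Real.sqrt_le_sqrt hρ2
    _ = ρ := Real.sqrt_sq hρ
  have hρ₀r : ρ₀ ≤ r := by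
    rw [hρ₀]
    calc Real.sqrt (r^2-b^2) ≤ Real.sqrt (r^2) := Real.sqrt_le_sqrt (by nlinarith)
    _ = r := Real.sqrt_sq hr.le
  have hρ₀0 : 0 ≤ ρ₀ := Real.sqrt_nonneg _
  have hρ₀sq : ρ₀^2 = r^2 - b^2 := Real.sq_sqrt hb2r2
  set Φ : EuclideanSpace ℝ (Fin (n-1)) → EuclideanSpace ℝ (Fin n) :=
    fun w => x + (V w - Real.sqrt (r^2 - ‖w‖^2) • v) with hΦ
  -- subset claim
  have hsub : {z : EuclideanSpace ℝ (Fin n) | z ∈ Metric.sphere x r ∧ ⟪z - x, v⟫ ≤ -b}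
      ⊆ Φ '' (Metric.closedBall 0 ρ₀) := by
    rintro z ⟨hz1, hz2⟩
    rw [Metric.mem_sphere, dist_eq_norm] at hz1
    set c : ℝ := ⟪z - x, v⟫ with hc
    have hcneg : c ≤ -b := hz2
    set y : EuclideanSpace ℝ (Fin n) := z - x - c • v with hy
    have h1 : ⟪v, z - x⟫ = c := by rw [hc]; exact (real_inner_comm v (z-x)).symm
    have hvy : ⟪v, y⟫ = 0 := by
      rw [hy, inner_sub_right, real_inner_smul_right, h1, real_inner_self_eq_norm_sq, hv]
      ring
    have hymem : y ∈ K := by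
      rw [hK, Submodule.mem_orthogonal_singleton_iff_inner_right]
      exact hvy
    have hyv0 : ⟪y, v⟫ = 0 := by rw [real_inner_comm]; exact hvy
    have hzxy : z - x = y + c • v := by rw [hy]; abel
    have hyc : ⟪y, c • v⟫ = 0 := by rw [real_inner_smul_right, hyv0]; ring
    have hncv : ‖c • v‖ = |c| := by rw [norm_smul, hv, mul_one, Real.norm_eq_abs]
    have hexp := norm_add_sq_real y (c • v)
    rw [← hzxy, hz1, hyc, hncv] at hexp
    have hy2 : ‖y‖^2 = r^2 - c^2 := by nlinarith [sq_abs c]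
    set w := B.repr ⟨y, hymem⟩ with hw
    have hVw : V w = y := by
      rw [hw]
      simp only [V, LinearIsometry.coe_comp, Function.comp_apply,
        LinearIsometryEquiv.coe_toLinearIsometry, LinearIsometryEquiv.symm_apply_apply,
        Submodule.coe_subtypeₗᵢ, Submodule.coe_subtype]
    have hnw : ‖w‖ = ‖y‖ := by
      rw [hw, LinearIsometryEquiv.norm_map]
      rfl
    have hc2 : b^2 ≤ c^2 := by nlinarith
    have hwball : w ∈ Metric.closedBall (0 : EuclideanSpace ℝ (Fin (n-1))) ρ₀ := by
      rw [Metric.mem_closedBall, dist_zero_right, hnw]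
      have h1 : ‖y‖^2 ≤ ρ₀^2 := by rw [hρ₀sq, hy2]; nlinarith
      nlinarith [norm_nonneg y, hρ₀0]
    refine ⟨w, hwball, ?_⟩
    rw [hΦ]
    simp only
    rw [hVw, hnw, hy2]
    have h2 : r^2 - (r^2 - c^2) = c^2 := by ring
    rw [h2, Real.sqrt_sq_eq_abs, abs_of_nonpos (by nlinarith : c ≤ 0)]
    rw [hy]
    module
  -- Lipschitz claim
  set Kl : ℝ≥0 := Real.toNNReal (1 + r/b) with hKl
  have hlip : LipschitzOnWith Kl Φ (Metric.closedBall 0 ρ₀) := by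
    apply LipschitzOnWith.of_dist_le_mul
    intro w hw w' hw'
    rw [Metric.mem_closedBall, dist_zero_right] at hw hw'
    have hKlc : (Kl : ℝ) = 1 + r/b := Real.coe_toNNReal _ (by positivity)
    rw [hKlc, dist_eq_norm, dist_eq_norm, hΦ]
    simp only
    have hexp : (x + (V w - Real.sqrt (r^2 - ‖w‖^2) • v)) - (x + (V w' - Real.sqrt (r^2 - ‖w'‖^2) • v))
        = (V w - V w') + (Real.sqrt (r^2 - ‖w'‖^2) - Real.sqrt (r^2 - ‖w‖^2)) • v := by
      rw [sub_smul]; abel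
    rw [hexp]
    have h1 : ‖V w - V w'‖ = ‖w - w'‖ := by rw [← LinearIsometry.map_sub]; exact V.norm_map _
    set u := Real.sqrt (r^2 - ‖w‖^2) with hu
    set u' := Real.sqrt (r^2 - ‖w'‖^2) with hu'
    have hnn : |‖w‖ - ‖w'‖| ≤ ‖w - w'‖ := abs_norm_sub_norm_le w w'
    rw [abs_le] at hnn
    have hgoal : |u' - u| ≤ (r/b) * ‖w - w'‖ := by
      rw [hu, hu']
      exact abs_sqrt_sub_sqrt_le hb hr (norm_nonneg w) (norm_nonneg w')
        (by nlinarith [hρ₀sq, norm_nonneg w]) (by nlinarith [hρ₀sq, norm_nonneg w'])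
        hnn.1 hnn.2
    calc ‖(V w - V w') + (u' - u) • v‖ ≤ ‖V w - V w'‖ + ‖(u' - u) • v‖ := norm_add_le _ _
      _ = ‖w - w'‖ + |u' - u| := by rw [h1, norm_smul, hv, Real.norm_eq_abs, mul_one]
      _ ≤ ‖w - w'‖ + (r/b) * ‖w - w'‖ := by linarith
      _ = (1 + r/b) * ‖w - w'‖ := by ring
  -- combine
  have himg := hlip.hausdorffMeasure_image_le
    (show (0:ℝ) ≤ (n:ℝ)-1 by
      have h2 : (2:ℝ) ≤ (n:ℝ) := by exact_mod_cast hn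
      linarith)
  have hball := euclid_ball_bound (n-1) hρ₀0
  rw [hcast] at hball
  calc μH[(n:ℝ)-1] {z : EuclideanSpace ℝ (Fin n) | z ∈ Metric.sphere x r ∧ ⟪z - x, v⟫ ≤ -b}
      ≤ μH[(n:ℝ)-1] (Φ '' (Metric.closedBall 0 ρ₀)) := measure_mono hsub
    _ ≤ (Kl : ℝ≥0∞) ^ ((n:ℝ)-1) * μH[(n:ℝ)-1] (Metric.closedBall (0:EuclideanSpace ℝ (Fin (n-1))) ρ₀) := himg
    _ ≤ (Kl : ℝ≥0∞) ^ ((n:ℝ)-1) * ENNReal.ofReal ((2 * Real.sqrt ((n:ℝ)-1) * ρ₀) ^ (n-1)) := by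
        gcongr
    _ ≤ ENNReal.ofReal (((1 + r/b) * (2 * Real.sqrt ((n:ℝ)-1) * ρ)) ^ (n-1)) := by
        have hKlc : (Kl : ℝ≥0∞) = ENNReal.ofReal (1 + r/b) := by
          rw [hKl, ENNReal.ofReal]
        rw [hKlc, ← hcast, ENNReal.rpow_natCast, ← ENNReal.ofReal_pow (by positivity),
          ← ENNReal.ofReal_mul (by positivity)]
        apply ENNReal.ofReal_le_ofReal
        rw [← mul_pow]
        apply pow_le_pow_left₀ (by positivity)
        gcongr

lemma sphere_bound (n : ℕ) (hn : 2 ≤ n) (x : EuclideanSpace ℝ (Fin n)) {r : ℝ} (hr : 0 < r) :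
    μH[(n:ℝ)-1] (Metric.sphere x r) ≤
      ENNReal.ofReal ((2*n) * ((1 + Real.sqrt n) * (2 * Real.sqrt ((n:ℝ)-1) * r)) ^ (n-1)) := by
  have hn0 : (0:ℝ) < n := by positivity
  have hn1 : (1:ℝ) ≤ (n:ℝ) := by exact_mod_cast (by omega : 1 ≤ n)
  have hsn : (1:ℝ) ≤ Real.sqrt n := by
    rw [show (1:ℝ) = Real.sqrt 1 by simp]
    exact Real.sqrt_le_sqrt hn1
  set b : ℝ := r / Real.sqrt n with hbdef
  have hb : 0 < b := by positivity
  have hbr : b ≤ r := by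
    rw [hbdef, div_le_iff₀ (by positivity)]
    nlinarith
  have hrb : r / b = Real.sqrt n := by
    rw [hbdef]
    field_simp
  set cap : EuclideanSpace ℝ (Fin n) → Set (EuclideanSpace ℝ (Fin n)) :=
    fun v => {z | z ∈ Metric.sphere x r ∧ ⟪z - x, v⟫ ≤ -b} with hcap
  set e : Fin n → EuclideanSpace ℝ (Fin n) := fun i => EuclideanSpace.single i (1:ℝ) with he
  have hcover : Metric.sphere x r ⊆ ⋃ i : Fin n, (cap (e i) ∪ cap (-(e i))) := by
    intro z hz
    rw [Metric.mem_sphere, dist_eq_norm] at hz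
    set w : EuclideanSpace ℝ (Fin n) := z - x with hw
    have hex : ∃ i, b ≤ |w i| := by
      by_contra hcon
      push_neg at hcon
      have hsum : ∑ i, ‖w i‖^2 < ∑ _i : Fin n, b^2 := by
        haveI : Nonempty (Fin n) := ⟨⟨0, by omega⟩⟩
        apply Finset.sum_lt_sum_of_nonempty
        · exact Finset.univ_nonempty
        · intro i _
          have := hcon i
          rw [Real.norm_eq_abs]
          nlinarith [abs_nonneg (w i)]
      rw [Finset.sum_const, Finset.card_univ, Fintype.card_fin] at hsum
      have hnr : ‖w‖ = r := hz
      rw [EuclideanSpace.norm_eq] at hnr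
      have h1 : ∑ i, ‖w i‖^2 = r^2 := by
        rw [← hnr, Real.sq_sqrt]
        positivity
      have h2 : n • b^2 = r^2 := by
        rw [nsmul_eq_mul, hbdef, div_pow, Real.sq_sqrt hn0.le]
        field_simp
      rw [h1] at hsum
      rw [h2] at hsum
      exact lt_irrefl _ hsum
    obtain ⟨i, hi⟩ := hex
    rw [Set.mem_iUnion]
    refine ⟨i, ?_⟩
    have hip : ⟪w, e i⟫ = w i := by
      rw [he]
      simpa using EuclideanSpace.inner_single_right (𝕜 := ℝ) i 1 w
    rcases le_or_gt (w i) 0 with hneg | hpos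
    · left
      rw [hcap]
      refine ⟨by rwa [Metric.mem_sphere, dist_eq_norm], ?_⟩
      rw [← hw, hip]
      rw [abs_of_nonpos hneg] at hi
      linarith
    · right
      refine ⟨by rwa [Metric.mem_sphere, dist_eq_norm], ?_⟩
      rw [← hw, inner_neg_right, hip]
      rw [abs_of_pos hpos] at hi
      linarith
  set M : ℝ≥0∞ := ENNReal.ofReal (((1 + Real.sqrt n) * (2 * Real.sqrt ((n:ℝ)-1) * r)) ^ (n-1)) with hM
  have hcapM : ∀ v : EuclideanSpace ℝ (Fin n), ‖v‖ = 1 → μH[(n:ℝ)-1] (cap v) ≤ M := by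
    intro v hv
    have := cap_bound n hn x v hv (ρ := r) hr hb hbr (by nlinarith) hr.le
    rw [hrb] at this
    exact this
  calc μH[(n:ℝ)-1] (Metric.sphere x r) ≤ μH[(n:ℝ)-1] (⋃ i : Fin n, (cap (e i) ∪ cap (-(e i)))) :=
        measure_mono hcover
    _ ≤ ∑ i : Fin n, μH[(n:ℝ)-1] (cap (e i) ∪ cap (-(e i))) := measure_iUnion_fintype_le _ _
    _ ≤ ∑ _i : Fin n, (M + M) := by
        apply Finset.sum_le_sum
        intro i _
        calc μH[(n:ℝ)-1] (cap (e i) ∪ cap (-(e i)))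
            ≤ μH[(n:ℝ)-1] (cap (e i)) + μH[(n:ℝ)-1] (cap (-(e i))) := measure_union_le _ _
          _ ≤ M + M := by
              apply add_le_add
              · exact hcapM _ (by rw [he]; simp)
              · exact hcapM _ (by rw [norm_neg, he]; simp)
    _ = (n : ℝ≥0∞) * (M + M) := by rw [Finset.sum_const, Finset.card_univ, Fintype.card_fin, nsmul_eq_mul]
    _ = ENNReal.ofReal ((2*n) * ((1 + Real.sqrt n) * (2 * Real.sqrt ((n:ℝ)-1) * r)) ^ (n-1)) := by
        rw [hM, ← ENNReal.ofReal_natCast n, ← ENNReal.ofReal_add (by positivity) (by positivity),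
          ← ENNReal.ofReal_mul (by positivity)]
        congr 1
        ring

noncomputable def Kb (n : ℕ) : ℝ :=
  ((1 + Real.sqrt 2) * (2 * Real.sqrt ((n:ℝ)-1) * Real.sqrt 2)) ^ (n-1)
    + (2*n) * ((1 + Real.sqrt n) * (2 * Real.sqrt ((n:ℝ)-1) * 2)) ^ (n-1)

lemma capBall_bound (n : ℕ) (hn : 2 ≤ n) (x : EuclideanSpace ℝ (Fin n)) {r s : ℝ}
    (hr : 0 < r) (hxr : r ≤ 2 * ‖x‖) :
    μH[(n:ℝ)-1] (Metric.sphere x r ∩ Metric.ball 0 s)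
      ≤ ENNReal.ofReal (Kb n * Real.sqrt (max (s^2 - (‖x‖-r)^2) 0) ^ (n-1)) := by
  have hx0 : 0 < ‖x‖ := by linarith
  set a : ℝ := ‖x‖ - r with ha
  set Dm : ℝ := max (s^2 - a^2) 0 with hDm
  have hDm0 : 0 ≤ Dm := le_max_right _ _
  have hKb0 : 0 ≤ Kb n := by
    unfold Kb
    positivity
  by_cases hD : s^2 - a^2 ≤ 0
  · have hempty : Metric.sphere x r ∩ Metric.ball 0 s = ∅ := by
      rw [Set.eq_empty_iff_forall_notMem]
      rintro z ⟨hz1, hz2⟩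
      rw [Metric.mem_sphere, dist_eq_norm] at hz1
      rw [Metric.mem_ball, dist_zero_right] at hz2
      have habs : |a| ≤ ‖z‖ := by
        have h1 := abs_norm_sub_norm_le x (x - z)
        have h2 : x - (x - z) = z := by abel
        rw [h2] at h1
        have h3 : ‖x - z‖ = r := by rw [norm_sub_rev]; exact hz1
        rw [h3] at h1
        exact h1
      nlinarith [abs_nonneg a, sq_abs a, norm_nonneg z]
    rw [hempty, measure_empty]
    exact zero_le
  push_neg at hD
  have hDmD : Dm = s^2 - a^2 := max_eq_left hD.le
  set c₀ : ℝ := (s^2 - ‖x‖^2 - r^2)/(2*‖x‖) with hc₀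
  have hkey : 2*‖x‖*(c₀ + r) = s^2 - a^2 := by
    rw [hc₀, ha]
    field_simp
    ring
  have hc₀r : -r < c₀ := by nlinarith
  set v : EuclideanSpace ℝ (Fin n) := ‖x‖⁻¹ • x with hv
  have hv1 : ‖v‖ = 1 := by
    rw [hv, norm_smul, norm_inv, norm_norm, inv_mul_cancel₀ hx0.ne']
  have hmem : ∀ z, z ∈ Metric.sphere x r ∩ Metric.ball 0 s → ⟪z - x, v⟫ ≤ c₀ := by
    rintro z ⟨hz1, hz2⟩
    rw [Metric.mem_sphere, dist_eq_norm] at hz1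
    rw [Metric.mem_ball, dist_zero_right] at hz2
    have hzs : ‖z‖^2 < s^2 := by nlinarith [norm_nonneg z]
    have hexp := norm_add_sq_real x (z - x)
    rw [show x + (z - x) = z by abel, hz1] at hexp
    have hinner : ⟪z - x, v⟫ = ‖x‖⁻¹ * ⟪x, z - x⟫ := by
      rw [hv, real_inner_smul_right, real_inner_comm]
    rw [hinner, hc₀]
    rw [div_eq_mul_inv, mul_comm ((s^2 - ‖x‖^2 - r^2)) _]
    have h1 : ⟪x, z-x⟫ ≤ (s^2 - ‖x‖^2 - r^2)/2 := by nlinarith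
    have h2 : (0:ℝ) < ‖x‖⁻¹ := by positivity
    calc ‖x‖⁻¹ * ⟪x, z-x⟫ ≤ ‖x‖⁻¹ * ((s^2 - ‖x‖^2 - r^2)/2) := by
          exact mul_le_mul_of_nonneg_left h1 h2.le
      _ = (2*‖x‖)⁻¹ * (s^2 - ‖x‖^2 - r^2) := by
          rw [mul_inv]
          ring
  have hsqrt2 : (0:ℝ) < Real.sqrt 2 := by positivity
  have hsqrt2sq : Real.sqrt 2 ^ 2 = 2 := Real.sq_sqrt (by norm_num)
  have hsqrt2le : Real.sqrt 2 ≤ 1.5 := by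
    rw [show (1.5:ℝ) = Real.sqrt (1.5^2) from (Real.sqrt_sq (by norm_num)).symm]
    exact Real.sqrt_le_sqrt (by norm_num)
  rcases le_or_gt c₀ (-(r/Real.sqrt 2)) with hc | hc
  · -- graph branch
    have hb0 : 0 < -c₀ := by
      have : 0 < r/Real.sqrt 2 := by positivity
      linarith
    have hbr : -c₀ ≤ r := by linarith
    have hsDm : Real.sqrt Dm ^ 2 = Dm := Real.sq_sqrt hDm0
    have hρ2 : r^2 - (-c₀)^2 ≤ (Real.sqrt 2 * Real.sqrt Dm)^2 := by
      rw [mul_pow, hsqrt2sq, hsDm, hDmD]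
      nlinarith [hkey, mul_le_mul_of_nonneg_right (show r - c₀ ≤ 4*‖x‖ by linarith)
        (show (0:ℝ) ≤ r + c₀ by linarith)]
    have hsubset : Metric.sphere x r ∩ Metric.ball 0 s ⊆
        {z : EuclideanSpace ℝ (Fin n) | z ∈ Metric.sphere x r ∧ ⟪z - x, v⟫ ≤ -(-c₀)} := by
      intro z hz
      exact ⟨hz.1, by rw [neg_neg]; exact hmem z hz⟩
    have hcb := cap_bound n hn x v hv1 (b := -c₀) (ρ := Real.sqrt 2 * Real.sqrt Dm)
      hr hb0 hbr hρ2 (by positivity)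
    calc μH[(n:ℝ)-1] (Metric.sphere x r ∩ Metric.ball 0 s)
        ≤ μH[(n:ℝ)-1] {z : EuclideanSpace ℝ (Fin n) | z ∈ Metric.sphere x r ∧ ⟪z - x, v⟫ ≤ -(-c₀)} :=
          measure_mono hsubset
      _ ≤ ENNReal.ofReal (((1 + r/(-c₀)) * (2 * Real.sqrt ((n:ℝ)-1) * (Real.sqrt 2 * Real.sqrt Dm))) ^ (n-1)) := hcb
      _ ≤ ENNReal.ofReal (Kb n * Real.sqrt Dm ^ (n-1)) := by
          apply ENNReal.ofReal_le_ofReal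
          have hrc : r/(-c₀) ≤ Real.sqrt 2 := by
            rw [div_le_iff₀ hb0]
            have h3 : r/Real.sqrt 2 ≤ -c₀ := by linarith
            rw [div_le_iff₀ hsqrt2] at h3
            linarith
          have step1 : ((1 + r/(-c₀)) * (2 * Real.sqrt ((n:ℝ)-1) * (Real.sqrt 2 * Real.sqrt Dm))) ^ (n-1)
              ≤ ((1 + Real.sqrt 2) * (2 * Real.sqrt ((n:ℝ)-1) * (Real.sqrt 2 * Real.sqrt Dm))) ^ (n-1) := by
            apply pow_le_pow_left₀ (by positivity)
            gcongr
          refine step1.trans ?_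
          rw [show (1 + Real.sqrt 2) * (2 * Real.sqrt ((n:ℝ)-1) * (Real.sqrt 2 * Real.sqrt Dm))
              = ((1 + Real.sqrt 2) * (2 * Real.sqrt ((n:ℝ)-1) * Real.sqrt 2)) * Real.sqrt Dm by ring,
            mul_pow]
          unfold Kb
          have h0 : (0:ℝ) ≤ Real.sqrt Dm ^ (n-1) := by positivity
          nlinarith [pow_nonneg (by positivity : (0:ℝ) ≤ (1 + Real.sqrt n) * (2 * Real.sqrt ((n:ℝ)-1) * 2)) (n-1),
            mul_nonneg (by positivity : (0:ℝ) ≤ 2*(n:ℝ)) h0]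
  · -- full sphere branch
    have hDr : r^2 ≤ 4 * Dm := by
      rw [hDmD]
      have h1 : r/Real.sqrt 2 ≤ 0.75 * r := by
        rw [div_le_iff₀ hsqrt2]
        nlinarith
      have h2 : r * (c₀ + r) ≤ 2*‖x‖*(c₀+r) := by
        apply mul_le_mul_of_nonneg_right hxr (by linarith)
      nlinarith
    have hrD : r ≤ 2 * Real.sqrt Dm := by
      have := Real.sqrt_le_sqrt hDr
      rw [show (4:ℝ)*Dm = (2*Real.sqrt Dm)^2 by rw [mul_pow]; rw [Real.sq_sqrt hDm0]; ring] at hDr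
      nlinarith [Real.sqrt_nonneg Dm]
    calc μH[(n:ℝ)-1] (Metric.sphere x r ∩ Metric.ball 0 s)
        ≤ μH[(n:ℝ)-1] (Metric.sphere x r) := measure_mono Set.inter_subset_left
      _ ≤ ENNReal.ofReal ((2*n) * ((1 + Real.sqrt n) * (2 * Real.sqrt ((n:ℝ)-1) * r)) ^ (n-1)) :=
          sphere_bound n hn x hr
      _ ≤ ENNReal.ofReal (Kb n * Real.sqrt Dm ^ (n-1)) := by
          apply ENNReal.ofReal_le_ofReal
          have step1 : ((1 + Real.sqrt n) * (2 * Real.sqrt ((n:ℝ)-1) * r)) ^ (n-1)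
              ≤ ((1 + Real.sqrt n) * (2 * Real.sqrt ((n:ℝ)-1) * (2 * Real.sqrt Dm))) ^ (n-1) := by
            apply pow_le_pow_left₀ (by positivity)
            gcongr
          have step2 : (2*(n:ℝ)) * ((1 + Real.sqrt n) * (2 * Real.sqrt ((n:ℝ)-1) * r)) ^ (n-1)
              ≤ (2*(n:ℝ)) * ((1 + Real.sqrt n) * (2 * Real.sqrt ((n:ℝ)-1) * (2 * Real.sqrt Dm))) ^ (n-1) := by
            apply mul_le_mul_of_nonneg_left step1 (by positivity)
          refine step2.trans ?_
          rw [show (1 + Real.sqrt n) * (2 * Real.sqrt ((n:ℝ)-1) * (2 * Real.sqrt Dm))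
              = ((1 + Real.sqrt n) * (2 * Real.sqrt ((n:ℝ)-1) * 2)) * Real.sqrt Dm by ring,
            mul_pow]
          unfold Kb
          have h0 : (0:ℝ) ≤ Real.sqrt Dm ^ (n-1) := by positivity
          nlinarith [pow_nonneg (by positivity : (0:ℝ) ≤ (1 + Real.sqrt 2) * (2 * Real.sqrt ((n:ℝ)-1) * Real.sqrt 2)) (n-1)]

lemma sqrt_nm1_pos (n : ℕ) (hn : 2 ≤ n) : 0 < Real.sqrt ((n:ℝ)-1) := by
  apply Real.sqrt_pos.mpr
  have : (2:ℝ) ≤ (n:ℝ) := by exact_mod_cast hn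
  linarith

lemma Kb_pos (n : ℕ) (hn : 2 ≤ n) : 0 < Kb n := by
  have h1 := sqrt_nm1_pos n hn
  have hb1 : (0:ℝ) < (1 + Real.sqrt 2) * (2 * Real.sqrt ((n:ℝ)-1) * Real.sqrt 2) :=
    mul_pos (by positivity) (mul_pos (by linarith) (by positivity))
  have hb2 : (0:ℝ) < (1 + Real.sqrt n) * (2 * Real.sqrt ((n:ℝ)-1) * 2) :=
    mul_pos (by positivity) (by linarith)
  have hn0 : (0:ℝ) < 2*(n:ℝ) := by
    have : (2:ℝ) ≤ (n:ℝ) := by exact_mod_cast hn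
    linarith
  unfold Kb
  exact add_pos (pow_pos hb1 _) (mul_pos hn0 (pow_pos hb2 _))

lemma one_le_jap (t : ℝ) : 1 ≤ jap t := by
  have h := Real.sqrt_le_sqrt (show (1:ℝ) ≤ 1 + t^2 by nlinarith [sq_nonneg t])
  rwa [Real.sqrt_one] at h

lemma jap_pos (t : ℝ) : 0 < jap t := lt_of_lt_of_le one_pos (one_le_jap t)

lemma jap_sq (t : ℝ) : jap t ^ 2 = 1 + t^2 := Real.sq_sqrt (by positivity)

lemma jap_le_jap {s t : ℝ} (h : s^2 ≤ t^2) : jap s ≤ jap t :=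
  Real.sqrt_le_sqrt (by linarith)

/-- Surface "constant" for the sphere bound in product form. -/
noncomputable def Cs (n : ℕ) : ℝ := (2*(n:ℝ)) * ((1 + Real.sqrt n) * (2 * Real.sqrt ((n:ℝ)-1))) ^ (n-1)

lemma Cs_pos (n : ℕ) (hn : 2 ≤ n) : 0 < Cs n := by
  have h1 := sqrt_nm1_pos n hn
  have hb : (0:ℝ) < (1 + Real.sqrt n) * (2 * Real.sqrt ((n:ℝ)-1)) :=
    mul_pos (by positivity) (by linarith)
  have hn0 : (0:ℝ) < 2*(n:ℝ) := by
    have : (2:ℝ) ≤ (n:ℝ) := by exact_mod_cast hn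
    linarith
  unfold Cs
  exact mul_pos hn0 (pow_pos hb _)

lemma sphere_bound' (n : ℕ) (hn : 2 ≤ n) (x : EuclideanSpace ℝ (Fin n)) {r : ℝ} (hr : 0 < r) :
    μH[(n:ℝ)-1] (Metric.sphere x r) ≤ ENNReal.ofReal (Cs n * r ^ (n-1)) := by
  refine (sphere_bound n hn x hr).trans (le_of_eq ?_)
  congr 1
  rw [show (1 + Real.sqrt n) * (2 * Real.sqrt ((n:ℝ)-1) * r)
      = ((1 + Real.sqrt n) * (2 * Real.sqrt ((n:ℝ)-1))) * r by ring, mul_pow, Cs]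
  ring

lemma integral_sphere_le (n : ℕ) (hn : 2 ≤ n) (x : EuclideanSpace ℝ (Fin n)) {r B : ℝ} (hr : 0 < r)
    (f : EuclideanSpace ℝ (Fin n) → ℝ) (hB0 : 0 ≤ B) (hB : ∀ z ∈ Metric.sphere x r, |f z| ≤ B) :
    (∫ z in Metric.sphere x r, f z ∂μH[(n:ℝ)-1]) ≤ Cs n * r ^ (n-1) * B := by
  have hfin : μH[(n:ℝ)-1] (Metric.sphere x r) < ⊤ :=
    lt_of_le_of_lt (sphere_bound' n hn x hr) ENNReal.ofReal_lt_top
  have key := norm_setIntegral_le_of_norm_le_const (μ := μH[(n:ℝ)-1]) hfin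
    (f := f) (C := B)
    (fun z hz => by rw [Real.norm_eq_abs]; exact hB z hz)
  have h2 : (μH[(n:ℝ)-1] (Metric.sphere x r)).toReal ≤ Cs n * r ^ (n-1) :=
    ENNReal.toReal_le_of_le_ofReal (mul_nonneg (Cs_pos n hn).le (by positivity)) (sphere_bound' n hn x hr)
  calc (∫ z in Metric.sphere x r, f z ∂μH[(n:ℝ)-1])
      ≤ ‖∫ z in Metric.sphere x r, f z ∂μH[(n:ℝ)-1]‖ := le_abs_self _
    _ ≤ B * (μH[(n:ℝ)-1] (Metric.sphere x r)).toReal := key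
    _ ≤ B * (Cs n * r ^ (n-1)) := mul_le_mul_of_nonneg_left h2 hB0
    _ = Cs n * r ^ (n-1) * B := by ring

lemma case2_core (n : ℕ) (hn : 2 ≤ n) (N : ℝ) (hN : (n:ℝ)-1 < N)
    (x : EuclideanSpace ℝ (Fin n)) {r : ℝ} (hr : 0 < r) (hxr : r ≤ 2 * ‖x‖) :
    (∫ z in Metric.sphere x r, jap ‖z‖ ^ (-N) ∂μH[(n:ℝ)-1])
      ≤ (Kb n / (1 - ((n:ℝ)-1)/N)) * jap (‖x‖ - r) ^ ((n:ℝ)-1-N) := by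
  have hn1 : (1:ℝ) ≤ (n:ℝ)-1 := by
    have : (2:ℝ) ≤ (n:ℝ) := by exact_mod_cast hn
    linarith
  have hN0 : 0 < N := by linarith
  set p : ℝ := ((n:ℝ)-1)/N with hp
  have hp0 : 0 < p := by positivity
  have hp1 : p < 1 := by
    rw [hp, div_lt_one hN0]
    linarith
  set q : ℝ := -p with hq
  have hqgt : -1 < q := by rw [hq]; linarith
  have hq1 : 0 < q + 1 := by rw [hq]; linarith
  set A : ℝ := jap (‖x‖ - r) with hA
  have hA1 : 1 ≤ A := one_le_jap _
  have hA0 : 0 < A := by linarith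
  set T : ℝ := A ^ (-N) with hT
  have hT0 : 0 < T := Real.rpow_pos_of_pos hA0 _
  have hT1 : T ≤ 1 := Real.rpow_le_one_of_one_le_of_nonpos hA1 (by linarith)
  set f : EuclideanSpace ℝ (Fin n) → ℝ := fun z => jap ‖z‖ ^ (-N) with hf
  have hf0 : ∀ z, 0 ≤ f z := fun z => Real.rpow_nonneg (jap_pos _).le _
  have hjapc : Continuous fun z : EuclideanSpace ℝ (Fin n) => jap ‖z‖ := by
    unfold jap
    exact (continuous_const.add (continuous_norm.pow 2)).sqrt
  have hfc : Continuous f :=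
    hjapc.rpow_const (fun z => Or.inl (jap_pos _).ne')
  set S : Set (EuclideanSpace ℝ (Fin n)) := Metric.sphere x r with hS
  have hfinS : μH[(n:ℝ)-1] S < ⊤ :=
    lt_of_le_of_lt (sphere_bound' n hn x hr) ENNReal.ofReal_lt_top
  set ν : Measure (EuclideanSpace ℝ (Fin n)) := μH[(n:ℝ)-1].restrict S with hν
  haveI : IsFiniteMeasure ν := ⟨by rw [hν, Measure.restrict_apply_univ]; exact hfinS⟩
  -- norms on the sphere are bounded below
  have hznorm : ∀ z ∈ S, (‖x‖-r)^2 ≤ ‖z‖^2 := by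
    intro z hz
    rw [hS, Metric.mem_sphere, dist_eq_norm] at hz
    have h1 := abs_norm_sub_norm_le x (x - z)
    rw [show x - (x - z) = z by abel] at h1
    rw [show ‖x - z‖ = r by rw [norm_sub_rev]; exact hz] at h1
    calc (‖x‖-r)^2 = |‖x‖ - r|^2 := (sq_abs _).symm
      _ ≤ ‖z‖^2 := by nlinarith [abs_nonneg (‖x‖ - r), norm_nonneg z]
  have hfz : ∀ z ∈ S, f z ≤ T := by
    intro z hz
    rw [hf, hT]
    exact Real.rpow_le_rpow_of_nonpos hA0 (jap_le_jap (hznorm z hz)) (by linarith)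
  -- the layer cake tail bound
  have key : ∀ t ∈ Set.Ioi (0:ℝ), ν {z | t < f z} ≤
      Set.indicator (Set.Ioc 0 T) (fun t => ENNReal.ofReal (Kb n * t ^ q)) t := by
    intro t ht
    rw [Set.mem_Ioi] at ht
    have hmeas : MeasurableSet {z | t < f z} := measurableSet_lt measurable_const hfc.measurable
    rw [hν, Measure.restrict_apply hmeas]
    by_cases htT : t ≤ T
    · rw [Set.indicator_of_mem (Set.mem_Ioc.mpr ⟨ht, htT⟩)]
      set σ : ℝ := t ^ (-N)⁻¹ with hσ
      have hσ0 : 0 < σ := Real.rpow_pos_of_pos ht _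
      have hσ1 : 1 ≤ σ :=
        Real.one_le_rpow_of_pos_of_le_one_of_nonpos ht (htT.trans hT1)
          (by rw [inv_nonpos]; linarith)
      set st : ℝ := Real.sqrt (σ^2 - 1) with hst
      have hsub : {z | t < f z} ∩ S ⊆ S ∩ Metric.ball 0 st := by
        rintro z ⟨hz2, hz1⟩
        refine ⟨hz1, ?_⟩
        rw [Metric.mem_ball, dist_zero_right]
        have hJσ : jap ‖z‖ < σ := by
          rw [hσ]
          exact (Real.lt_rpow_inv_iff_of_neg (jap_pos _) ht (by linarith)).mpr hz2
        have hJ2 : jap ‖z‖ ^2 < σ^2 := by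
          nlinarith [jap_pos ‖z‖]
        rw [jap_sq] at hJ2
        rw [hst]
        exact (Real.lt_sqrt (norm_nonneg z)).mpr (by linarith)
      have hcap := capBall_bound n hn x (s := st) hr hxr
      have hst2 : st^2 = σ^2 - 1 := Real.sq_sqrt (by nlinarith)
      calc μH[(n:ℝ)-1] ({z | t < f z} ∩ S) ≤ μH[(n:ℝ)-1] (S ∩ Metric.ball 0 st) :=
            measure_mono hsub
        _ ≤ ENNReal.ofReal (Kb n * Real.sqrt (max (st^2 - (‖x‖-r)^2) 0) ^ (n-1)) := hcap
        _ ≤ ENNReal.ofReal (Kb n * t ^ q) := by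
            apply ENNReal.ofReal_le_ofReal
            have h1 : Real.sqrt (max (st^2 - (‖x‖-r)^2) 0) ≤ σ := by
              rw [show σ = Real.sqrt (σ^2) from (Real.sqrt_sq hσ0.le).symm]
              apply Real.sqrt_le_sqrt
              rw [hst2]
              apply max_le (by nlinarith [sq_nonneg (‖x‖-r)]) (by positivity)
            have h2 : Real.sqrt (max (st^2 - (‖x‖-r)^2) 0) ^ (n-1) ≤ σ ^ (n-1) :=
              pow_le_pow_left₀ (Real.sqrt_nonneg _) h1 _
            have h3 : σ ^ (n-1) = t ^ q := by
              rw [hσ, ← Real.rpow_natCast (t ^ (-N)⁻¹) (n-1), ← Real.rpow_mul ht.le]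
              congr 1
              have hcast : ((n-1:ℕ):ℝ) = (n:ℝ) - 1 := by
                have h1 : (1:ℕ) ≤ n := by omega
                push_cast [Nat.cast_sub h1]; ring
              rw [hcast, hq, hp, inv_neg, div_eq_mul_inv]
              ring
            rw [← h3]
            exact mul_le_mul_of_nonneg_left h2 (Kb_pos n hn).le
    · push_neg at htT
      have hempty : {z | t < f z} ∩ S = ∅ := by
        rw [Set.eq_empty_iff_forall_notMem]
        rintro z ⟨hz2, hz1⟩
        exact absurd hz2 (not_lt.mpr ((hfz z hz1).trans htT.le))
      rw [hempty, measure_empty]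
      exact zero_le
  -- assemble
  have heq1 : (∫ z in S, f z ∂μH[(n:ℝ)-1]) = (∫⁻ z, ENNReal.ofReal (f z) ∂ν).toReal := by
    rw [hν]
    exact integral_eq_lintegral_of_nonneg_ae (ae_of_all _ hf0)
      hfc.aestronglyMeasurable.restrict
  have heq2 : (∫⁻ z, ENNReal.ofReal (f z) ∂ν) = ∫⁻ t in Set.Ioi (0:ℝ), ν {z | t < f z} :=
    lintegral_eq_lintegral_meas_lt ν (ae_of_all _ hf0) hfc.measurable.aemeasurable
  have hint : IntegrableOn (fun t => Kb n * t ^ q) (Set.Ioc 0 T) :=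
    ((intervalIntegral.intervalIntegrable_rpow' hqgt).1).const_mul _
  have hintnn : 0 ≤ᵐ[volume.restrict (Set.Ioc 0 T)] (fun t => Kb n * t ^ q) := by
    refine (ae_restrict_iff' measurableSet_Ioc).mpr (ae_of_all _ fun t ht => ?_)
    exact mul_nonneg (Kb_pos n hn).le (Real.rpow_nonneg ht.1.le _)
  have hval : (∫ t in Set.Ioc (0:ℝ) T, Kb n * t ^ q) = Kb n * (T^(q+1)/(q+1)) := by
    rw [← intervalIntegral.integral_of_le hT0.le, intervalIntegral.integral_const_mul,
      integral_rpow (Or.inl hqgt), Real.zero_rpow (by linarith : q + 1 ≠ 0)]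
    ring
  have hTq : T^(q+1) = A^((n:ℝ)-1-N) := by
    rw [hT, ← Real.rpow_mul hA0.le]
    congr 1
    rw [hq, hp]
    field_simp
    ring
  have hRHS0 : 0 ≤ (Kb n / (1 - ((n:ℝ)-1)/N)) * A ^ ((n:ℝ)-1-N) :=
    mul_nonneg (div_nonneg (Kb_pos n hn).le (by rw [← hp]; linarith)) (Real.rpow_nonneg hA0.le _)
  rw [show (∫ z in Metric.sphere x r, jap ‖z‖ ^ (-N) ∂μH[(n:ℝ)-1]) = ∫ z in S, f z ∂μH[(n:ℝ)-1]
    from rfl, heq1]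
  apply ENNReal.toReal_le_of_le_ofReal hRHS0
  rw [heq2]
  calc (∫⁻ t in Set.Ioi (0:ℝ), ν {z | t < f z})
      ≤ ∫⁻ t in Set.Ioi (0:ℝ), Set.indicator (Set.Ioc 0 T) (fun t => ENNReal.ofReal (Kb n * t ^ q)) t :=
        lintegral_mono_ae ((ae_restrict_iff' measurableSet_Ioi).mpr (ae_of_all _ key))
    _ = ∫⁻ t in Set.Ioc (0:ℝ) T, ENNReal.ofReal (Kb n * t ^ q) := by
        rw [lintegral_indicator measurableSet_Ioc, Measure.restrict_restrict measurableSet_Ioc,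
          Set.inter_eq_self_of_subset_left Set.Ioc_subset_Ioi_self]
    _ = ENNReal.ofReal (∫ t in Set.Ioc (0:ℝ) T, Kb n * t ^ q) :=
        (ofReal_integral_eq_lintegral_ofReal hint hintnn).symm
    _ ≤ ENNReal.ofReal ((Kb n / (1 - ((n:ℝ)-1)/N)) * A ^ ((n:ℝ)-1-N)) := by
        apply ENNReal.ofReal_le_ofReal
        apply le_of_eq
        rw [hval, hTq, show 1 - ((n:ℝ)-1)/N = q + 1 by rw [hq, hp]; ring]
        ring


/-- For `n ≥ 2` and `N > n−1`, the surface integral of `⟨z⟩^(−N)` over the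
sphere `{z : |x−z| = r}` obeys the three-regime bound depending on whether `r < |x|/2`,
`|x|/2 ≤ r ≤ 2|x|`, or `r > 2|x|`. -/
theorem sphere_integral_bound
    (n : ℕ) (hn : 2 ≤ n) (N : ℝ) (hN : (n : ℝ) - 1 < N) :
    ∃ C : ℝ, 0 < C ∧ ∀ (x : EuclideanSpace ℝ (Fin n)) (r : ℝ), 0 < r →
      ((r < ‖x‖ / 2 →
        (∫ z in Metric.sphere x r, jap ‖z‖ ^ (-N) ∂(μH[(n : ℝ) - 1]))
          ≤ C * r ^ ((n : ℝ) - 1) * jap ‖x‖ ^ (-N)) ∧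
      (‖x‖ / 2 ≤ r → r ≤ 2 * ‖x‖ →
        (∫ z in Metric.sphere x r, jap ‖z‖ ^ (-N) ∂(μH[(n : ℝ) - 1]))
          ≤ C * ‖x‖ ^ ((n : ℝ) - 1) * jap ‖x‖ ^ (1 - (n : ℝ))
              * jap (‖x‖ - r) ^ ((n : ℝ) - 1 - N)) ∧
      (2 * ‖x‖ < r →
        (∫ z in Metric.sphere x r, jap ‖z‖ ^ (-N) ∂(μH[(n : ℝ) - 1]))
          ≤ C * r ^ ((n : ℝ) - 1) * jap r ^ (-N))) := by
  have hn1 : (1:ℝ) ≤ (n:ℝ)-1 := by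
    have : (2:ℝ) ≤ (n:ℝ) := by exact_mod_cast hn
    linarith
  have hN0 : 0 < N := by linarith
  have hcast : ((n-1:ℕ):ℝ) = (n:ℝ) - 1 := by
    have h1 : (1:ℕ) ≤ n := by omega
    push_cast [Nat.cast_sub h1]; ring
  have hs2 : (0:ℝ) < Real.sqrt 2 := by positivity
  set CL : ℝ := Kb n / (1 - ((n:ℝ)-1)/N) with hCL
  have hCL0 : 0 < CL := by
    apply div_pos (Kb_pos n hn)
    rw [sub_pos, div_lt_one hN0]
    exact hN
  set C : ℝ := Cs n * (2:ℝ)^N + CL * Real.sqrt 2 ^ (n-1) + Cs n * (2:ℝ)^(n-1) * Real.sqrt 2 ^ N + 1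
    with hC
  have ht1 : 0 < Cs n * (2:ℝ)^N := mul_pos (Cs_pos n hn) (Real.rpow_pos_of_pos two_pos N)
  have ht2 : 0 < CL * Real.sqrt 2 ^ (n-1) := mul_pos hCL0 (pow_pos hs2 _)
  have ht3 : 0 < Cs n * (2:ℝ)^(n-1) * Real.sqrt 2 ^ N :=
    mul_pos (mul_pos (Cs_pos n hn) (pow_pos two_pos _)) (Real.rpow_pos_of_pos hs2 N)
  have hC0 : 0 < C := by rw [hC]; linarith
  refine ⟨C, hC0, fun x r hr => ?_⟩
  have hrpow : r ^ ((n:ℝ)-1) = r ^ (n-1:ℕ) := by rw [← hcast, Real.rpow_natCast]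
  have habs : ∀ z ∈ Metric.sphere x r, |‖x‖ - r| ≤ ‖z‖ := by
    intro z hz
    rw [Metric.mem_sphere, dist_eq_norm] at hz
    have h1 := abs_norm_sub_norm_le x (x - z)
    rw [show x - (x - z) = z by abel, show ‖x - z‖ = r by rw [norm_sub_rev]; exact hz] at h1
    exact h1
  have hsqrt4 : Real.sqrt 4 = 2 := by
    rw [show (4:ℝ) = 2^2 by norm_num, Real.sqrt_sq (by norm_num)]
  refine ⟨?_, ?_, ?_⟩
  · -- Case 1 : r < ‖x‖/2
    intro h
    have hx0 : 0 < ‖x‖ := by linarith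
    set J : ℝ := jap ‖x‖ with hJ
    have hJ0 : 0 < J := jap_pos _
    have hB : ∀ z ∈ Metric.sphere x r, |jap ‖z‖ ^ (-N)| ≤ (2:ℝ)^N * J ^ (-N) := by
      intro z hz
      have h1 := habs z hz
      have h2 : ‖x‖ ≤ 2 * ‖z‖ := by
        rw [abs_of_nonneg (by linarith : 0 ≤ ‖x‖ - r)] at h1
        linarith
      have h3 : J ≤ 2 * jap ‖z‖ := by
        rw [hJ]
        unfold jap
        rw [show (2:ℝ) = Real.sqrt 4 from hsqrt4.symm, ← Real.sqrt_mul (by norm_num)]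
        apply Real.sqrt_le_sqrt
        nlinarith [norm_nonneg z, norm_nonneg x]
      have h4 : jap ‖z‖ ^ (-N) ≤ (J/2) ^ (-N) :=
        Real.rpow_le_rpow_of_nonpos (by positivity) (by linarith) (by linarith)
      have h5 : (J/2) ^ (-N) = (2:ℝ)^N * J ^ (-N) := by
        rw [Real.div_rpow (by positivity) (by norm_num), Real.rpow_neg (by norm_num : (0:ℝ) ≤ 2),
          div_inv_eq_mul]
        ring
      rw [abs_of_nonneg (Real.rpow_nonneg (jap_pos _).le _)]
      rw [h5] at h4
      exact h4
    have hB0 : 0 ≤ (2:ℝ)^N * J ^ (-N) :=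
      mul_nonneg (Real.rpow_nonneg (by norm_num) _) (Real.rpow_nonneg (jap_pos _).le _)
    calc (∫ z in Metric.sphere x r, jap ‖z‖ ^ (-N) ∂(μH[(n : ℝ) - 1]))
        ≤ Cs n * r ^ (n-1) * ((2:ℝ)^N * J ^ (-N)) := integral_sphere_le n hn x hr _ hB0 hB
      _ = (Cs n * (2:ℝ)^N) * (r ^ (n-1:ℕ) * J ^ (-N)) := by ring
      _ ≤ C * (r ^ (n-1:ℕ) * J ^ (-N)) := by
          apply mul_le_mul_of_nonneg_right (by rw [hC]; linarith)
          exact mul_nonneg (by positivity) (Real.rpow_nonneg (jap_pos _).le _)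
      _ = C * r ^ ((n:ℝ)-1) * J ^ (-N) := by rw [hrpow]; ring
  · -- Case 2 : ‖x‖/2 ≤ r ≤ 2‖x‖
    intro h1 h2
    have hx0 : 0 < ‖x‖ := by linarith
    set X : ℝ := ‖x‖ with hX
    set J : ℝ := jap X with hJ
    set A : ℝ := jap (X - r) with hA
    set β : ℝ := (n:ℝ)-1-N with hβ
    have hJ0 : 0 < J := jap_pos _
    have hA0 : 0 < A := jap_pos _
    have hβ0 : β ≤ 0 := by rw [hβ]; linarith
    have h1n : 1-(n:ℝ) ≤ 0 := by linarith
    have hI2 := case2_core n hn N hN x hr h2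
    have hAβ : 0 ≤ A ^ β := Real.rpow_nonneg hA0.le _
    have hsqpow : Real.sqrt 2 ^ (n-1:ℕ) * Real.sqrt 2 ^ (1-(n:ℝ)) = 1 := by
      rw [← Real.rpow_natCast (Real.sqrt 2) (n-1), ← Real.rpow_add hs2, hcast,
        show ((n:ℝ)-1) + (1-(n:ℝ)) = 0 by ring, Real.rpow_zero]
    rcases le_or_gt 1 X with hX1 | hX1
    · -- large ‖x‖
      have hJle : J ≤ Real.sqrt 2 * X := by
        rw [hJ]
        unfold jap
        rw [show Real.sqrt 2 * X = Real.sqrt (2 * X^2) by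
          rw [Real.sqrt_mul (by norm_num), Real.sqrt_sq (by linarith)]]
        apply Real.sqrt_le_sqrt
        nlinarith
      have hstep : (Real.sqrt 2 * X)^(1-(n:ℝ)) ≤ J^(1-(n:ℝ)) :=
        Real.rpow_le_rpow_of_nonpos hJ0 hJle h1n
      have hexpand : (Real.sqrt 2 * X)^(1-(n:ℝ)) = Real.sqrt 2^(1-(n:ℝ)) * X^(1-(n:ℝ)) :=
        Real.mul_rpow hs2.le (by linarith)
      have hXX : X^((n:ℝ)-1) * X^(1-(n:ℝ)) = 1 := by
        rw [← Real.rpow_add (by linarith : (0:ℝ) < X),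
          show ((n:ℝ)-1) + (1-(n:ℝ)) = 0 by ring, Real.rpow_zero]
      have hkey1 : Real.sqrt 2^(1-(n:ℝ)) ≤ X^((n:ℝ)-1) * J^(1-(n:ℝ)) := by
        calc Real.sqrt 2^(1-(n:ℝ))
            = X^((n:ℝ)-1) * (Real.sqrt 2^(1-(n:ℝ)) * X^(1-(n:ℝ))) := by
              rw [show X^((n:ℝ)-1) * (Real.sqrt 2^(1-(n:ℝ)) * X^(1-(n:ℝ)))
                = Real.sqrt 2^(1-(n:ℝ)) * (X^((n:ℝ)-1) * X^(1-(n:ℝ))) by ring, hXX, mul_one]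
          _ ≤ X^((n:ℝ)-1) * J^(1-(n:ℝ)) := by
              apply mul_le_mul_of_nonneg_left _ (Real.rpow_nonneg (by linarith) _)
              rw [← hexpand]
              exact hstep
      have hkey2 : CL ≤ C * (X^((n:ℝ)-1) * J^(1-(n:ℝ))) := by
        calc CL = (CL * Real.sqrt 2 ^ (n-1:ℕ)) * Real.sqrt 2^(1-(n:ℝ)) := by
              rw [mul_assoc, hsqpow, mul_one]
          _ ≤ C * Real.sqrt 2^(1-(n:ℝ)) := by
              apply mul_le_mul_of_nonneg_right (by rw [hC]; linarith)
              exact Real.rpow_nonneg hs2.le _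
          _ ≤ C * (X^((n:ℝ)-1) * J^(1-(n:ℝ))) := mul_le_mul_of_nonneg_left hkey1 hC0.le
      calc (∫ z in Metric.sphere x r, jap ‖z‖ ^ (-N) ∂(μH[(n : ℝ) - 1]))
          ≤ CL * A ^ β := hI2
        _ ≤ (C * (X^((n:ℝ)-1) * J^(1-(n:ℝ)))) * A ^ β := mul_le_mul_of_nonneg_right hkey2 hAβ
        _ = C * X^((n:ℝ)-1) * J^(1-(n:ℝ)) * A^β := by ring
    · -- small ‖x‖
      have hJ2 : J ≤ Real.sqrt 2 := by
        rw [hJ, show Real.sqrt 2 = jap 1 by unfold jap; norm_num]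
        exact jap_le_jap (by nlinarith)
      have hA2 : A ≤ Real.sqrt 2 := by
        rw [hA, show Real.sqrt 2 = jap 1 by unfold jap; norm_num]
        exact jap_le_jap (by nlinarith)
      have hB : ∀ z ∈ Metric.sphere x r, |jap ‖z‖ ^ (-N)| ≤ 1 := by
        intro z _
        rw [abs_of_nonneg (Real.rpow_nonneg (jap_pos _).le _)]
        exact Real.rpow_le_one_of_one_le_of_nonpos (one_le_jap _) (by linarith)
      have hI1 := integral_sphere_le n hn x hr _ (by norm_num) hB
      rw [mul_one] at hI1
      have hc2 : Real.sqrt 2^(1-(n:ℝ)) ≤ J^(1-(n:ℝ)) :=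
        Real.rpow_le_rpow_of_nonpos hJ0 hJ2 h1n
      have hc3 : Real.sqrt 2^β ≤ A^β := Real.rpow_le_rpow_of_nonpos hA0 hA2 hβ0
      have hc4 : Real.sqrt 2^(1-(n:ℝ)) * Real.sqrt 2^β = Real.sqrt 2^(-N) := by
        rw [← Real.rpow_add hs2, hβ]
        congr 1
        ring
      have hc5 : Real.sqrt 2 ^ N * Real.sqrt 2^(-N) = 1 := by
        rw [← Real.rpow_add hs2]
        norm_num
      have hXr : X ^ (n-1:ℕ) = X^((n:ℝ)-1) := by rw [← hcast, Real.rpow_natCast]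
      have hXnn : (0:ℝ) ≤ X^((n:ℝ)-1) := Real.rpow_nonneg hx0.le _
      have m1 : Real.sqrt 2^(1-(n:ℝ)) * Real.sqrt 2^β ≤ J^(1-(n:ℝ)) * A^β :=
        mul_le_mul hc2 hc3 (Real.rpow_nonneg hs2.le _) (Real.rpow_nonneg hJ0.le _)
      have e0 : Cs n * r ^ (n-1:ℕ) ≤ Cs n * 2^(n-1:ℕ) * X^((n:ℝ)-1) := by
        calc Cs n * r^(n-1:ℕ) ≤ Cs n * ((2*X)^(n-1:ℕ)) :=
              mul_le_mul_of_nonneg_left (pow_le_pow_left₀ hr.le h2 _) (Cs_pos n hn).le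
          _ = Cs n * 2^(n-1:ℕ) * X^(n-1:ℕ) := by rw [mul_pow]; ring
          _ = Cs n * 2^(n-1:ℕ) * X^((n:ℝ)-1) := by rw [hXr]
      have e1 : Cs n * 2^(n-1:ℕ) * X^((n:ℝ)-1)
          = (Cs n * 2^(n-1:ℕ) * Real.sqrt 2^N) * X^((n:ℝ)-1)
              * (Real.sqrt 2^(1-(n:ℝ)) * Real.sqrt 2^β) := by
        rw [hc4]
        rw [show (Cs n * 2^(n-1:ℕ) * Real.sqrt 2^N) * X^((n:ℝ)-1) * Real.sqrt 2^(-N)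
            = (Real.sqrt 2^N * Real.sqrt 2^(-N)) * (Cs n * 2^(n-1:ℕ) * X^((n:ℝ)-1)) by ring,
          hc5, one_mul]
      have e2 : (Cs n * 2^(n-1:ℕ) * Real.sqrt 2^N) * X^((n:ℝ)-1)
            * (Real.sqrt 2^(1-(n:ℝ)) * Real.sqrt 2^β)
          ≤ (C * X^((n:ℝ)-1)) * (J^(1-(n:ℝ)) * A^β) := by
        apply mul_le_mul ?_ m1
          (mul_nonneg (Real.rpow_nonneg hs2.le _) (Real.rpow_nonneg hs2.le _))
          (mul_nonneg hC0.le hXnn)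
        exact mul_le_mul_of_nonneg_right (by rw [hC]; linarith) hXnn
      calc (∫ z in Metric.sphere x r, jap ‖z‖ ^ (-N) ∂(μH[(n : ℝ) - 1]))
          ≤ Cs n * r ^ (n-1:ℕ) := hI1
        _ ≤ Cs n * 2^(n-1:ℕ) * X^((n:ℝ)-1) := e0
        _ = (Cs n * 2^(n-1:ℕ) * Real.sqrt 2^N) * X^((n:ℝ)-1)
              * (Real.sqrt 2^(1-(n:ℝ)) * Real.sqrt 2^β) := e1
        _ ≤ (C * X^((n:ℝ)-1)) * (J^(1-(n:ℝ)) * A^β) := e2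
        _ = C * X^((n:ℝ)-1) * J^(1-(n:ℝ)) * A^β := by ring
  · -- Case 3 : 2‖x‖ < r
    intro h
    set J : ℝ := jap r with hJ
    have hJ0 : 0 < J := jap_pos _
    have hB : ∀ z ∈ Metric.sphere x r, |jap ‖z‖ ^ (-N)| ≤ (2:ℝ)^N * J ^ (-N) := by
      intro z hz
      have h1 := habs z hz
      have h2 : r ≤ 2 * ‖z‖ := by
        rw [abs_of_nonpos (by nlinarith [norm_nonneg x] : ‖x‖ - r ≤ 0), neg_sub] at h1
        nlinarith [norm_nonneg x]
      have h3 : J ≤ 2 * jap ‖z‖ := by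
        rw [hJ]
        unfold jap
        rw [show (2:ℝ) = Real.sqrt 4 from hsqrt4.symm, ← Real.sqrt_mul (by norm_num)]
        apply Real.sqrt_le_sqrt
        nlinarith [norm_nonneg z]
      have h4 : jap ‖z‖ ^ (-N) ≤ (J/2) ^ (-N) :=
        Real.rpow_le_rpow_of_nonpos (by positivity) (by linarith) (by linarith)
      have h5 : (J/2) ^ (-N) = (2:ℝ)^N * J ^ (-N) := by
        rw [Real.div_rpow (by positivity) (by norm_num), Real.rpow_neg (by norm_num : (0:ℝ) ≤ 2),
          div_inv_eq_mul]
        ring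
      rw [abs_of_nonneg (Real.rpow_nonneg (jap_pos _).le _)]
      rw [h5] at h4
      exact h4
    have hB0 : 0 ≤ (2:ℝ)^N * J ^ (-N) :=
      mul_nonneg (Real.rpow_nonneg (by norm_num) _) (Real.rpow_nonneg (jap_pos _).le _)
    calc (∫ z in Metric.sphere x r, jap ‖z‖ ^ (-N) ∂(μH[(n : ℝ) - 1]))
        ≤ Cs n * r ^ (n-1) * ((2:ℝ)^N * J ^ (-N)) := integral_sphere_le n hn x hr _ hB0 hB
      _ = (Cs n * (2:ℝ)^N) * (r ^ (n-1:ℕ) * J ^ (-N)) := by ring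
      _ ≤ C * (r ^ (n-1:ℕ) * J ^ (-N)) := by
          apply mul_le_mul_of_nonneg_right (by rw [hC]; linarith)
          exact mul_nonneg (by positivity) (Real.rpow_nonneg (jap_pos _).le _)
      _ = C * r ^ ((n:ℝ)-1) * J ^ (-N) := by rw [hrpow]; ring
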